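/- Let (A,Δ) be an algebraic quantum group with left Haar functional φ and antipode S. Then for all a,b ∈ A: (ι⊙φ)((1⊗a)Δ(b)) = S((ι⊙φ)(Δ(a)(1⊗b))). -/

import Mathlib

open TensorProduct LinearMap

noncomputable section

/-- Slice on the left leg: `sliceL θ (x ⊗ y) = θ x • y`, i.e. `(θ ⊙ ι)`. -/
def sliceL {M N : Type*} [AddCommGroup M] [Module ℂ M] [AddCommGroup N] [Module ℂ N]
    (θ : M →ₗ[ℂ] ℂ) : M ⊗[ℂ] N →ₗ[ℂ] N :=
  TensorProduct.lift (LinearMap.lsmul ℂ N ∘ₗ θ)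

/-- Slice on the right leg: `sliceR θ (x ⊗ y) = θ y • x`, i.e. `(ι ⊙ θ)`. -/
def sliceR {M N : Type*} [AddCommGroup M] [Module ℂ M] [AddCommGroup N] [Module ℂ N]
    (θ : N →ₗ[ℂ] ℂ) : M ⊗[ℂ] N →ₗ[ℂ] M :=
  TensorProduct.lift ((LinearMap.lsmul ℂ M ∘ₗ θ).flip)

/-- An algebraic quantum group: a regular multiplier Hopf algebra `(A, Δ)` with a
(faithful) left invariant functional `φ`.  The comultiplication is encoded through the
canonical bijections `T1 a ⊗ b = Δ(a)(b ⊗ 1)`, `T2 (a ⊗ b) = Δ(a)(1 ⊗ b)`,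
`T3 (a ⊗ b) = (b ⊗ 1)Δ(a)`, `T4 (a ⊗ b) = (1 ⊗ b)Δ(a)` together with the left and right
multiplication operators `ΔL a`/`ΔR a` by `Δ(a)` on `A ⊗ A`. -/
structure AQG (A : Type*) [NonUnitalRing A] [Module ℂ A]
    [SMulCommClass ℂ A A] [IsScalarTower ℂ A A] where
  T1 : A ⊗[ℂ] A ≃ₗ[ℂ] A ⊗[ℂ] A
  T2 : A ⊗[ℂ] A ≃ₗ[ℂ] A ⊗[ℂ] A
  T3 : A ⊗[ℂ] A ≃ₗ[ℂ] A ⊗[ℂ] A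
  T4 : A ⊗[ℂ] A ≃ₗ[ℂ] A ⊗[ℂ] A
  counit : A →ₗ[ℂ] ℂ
  S : A ≃ₗ[ℂ] A
  phi : A →ₗ[ℂ] ℂ
  rho : A ≃ₗ[ℂ] A
  ΔL : A →ₗ[ℂ] (A ⊗[ℂ] A →ₗ[ℂ] A ⊗[ℂ] A)
  ΔR : A →ₗ[ℂ] (A ⊗[ℂ] A →ₗ[ℂ] A ⊗[ℂ] A)
  /- non-degeneracy of the algebra `A` -/
  nondeg_l : ∀ a : A, (∀ b : A, a * b = 0) → a = 0
  nondeg_r : ∀ a : A, (∀ b : A, b * a = 0) → a = 0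
  /- the counit is a non-zero homomorphism with `(ε ⊙ ι)Δ = (ι ⊙ ε)Δ = ι` -/
  counit_mul : ∀ a b : A, counit (a * b) = counit a * counit b
  counit_ne : counit ≠ 0
  counit_T1 : ∀ a b : A, sliceR counit (T1 (a ⊗ₜ b)) = a * b
  counit_T2 : ∀ a b : A, sliceL counit (T2 (a ⊗ₜ b)) = a * b
  counit_T3 : ∀ a b : A, sliceR counit (T3 (a ⊗ₜ b)) = b * a
  counit_T4 : ∀ a b : A, sliceL counit (T4 (a ⊗ₜ b)) = b * a
  /- the antipode -/
  S_mul : ∀ a b : A, S (a * b) = S b * S a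
  antipode_l : ∀ a b : A,
    LinearMap.mul' ℂ A (LinearMap.rTensor A S.toLinearMap (T2 (a ⊗ₜ b))) = counit a • b
  antipode_r : ∀ a b : A,
    LinearMap.mul' ℂ A (LinearMap.lTensor A S.toLinearMap (T3 (a ⊗ₜ b))) = counit a • b
  /- `φ` is a faithful left invariant functional -/
  phi_ne : phi ≠ 0
  phi_faithful_l : ∀ a : A, (∀ b : A, phi (a * b) = 0) → a = 0
  phi_faithful_r : ∀ a : A, (∀ b : A, phi (b * a) = 0) → a = 0
  left_inv_T1 : ∀ a b : A, sliceR phi (T1 (a ⊗ₜ b)) = phi a • b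
  left_inv_T3 : ∀ a b : A, sliceR phi (T3 (a ⊗ₜ b)) = phi a • b
  /- the weak KMS automorphism `ρ`: `φ(ab) = φ(b ρ(a))` -/
  rho_mul : ∀ a b : A, rho (a * b) = rho a * rho b
  phi_kms : ∀ a b : A, phi (a * b) = phi (b * rho a)
  /- `Δ` is a (non-degenerate) homomorphism into `M(A ⊗ A)` -/
  ΔL_mul : ∀ (a b : A) (z : A ⊗[ℂ] A), ΔL (a * b) z = ΔL a (ΔL b z)
  ΔR_mul : ∀ (a b : A) (z : A ⊗[ℂ] A), ΔR (a * b) z = ΔR b (ΔR a z)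
  ΔL_assoc : ∀ (a : A) (z w : A ⊗[ℂ] A), ΔL a (z * w) = ΔL a z * w
  ΔR_assoc : ∀ (a : A) (z w : A ⊗[ℂ] A), ΔR a (z * w) = z * ΔR a w
  ΔLR : ∀ (a : A) (z w : A ⊗[ℂ] A), ΔR a z * w = z * ΔL a w
  ΔL_T1 : ∀ (a b : A) (z : A ⊗[ℂ] A),
    T1 (a ⊗ₜ b) * z = ΔL a (TensorProduct.map (LinearMap.mulLeft ℂ b) LinearMap.id z)
  ΔL_T2 : ∀ (a b : A) (z : A ⊗[ℂ] A),
    T2 (a ⊗ₜ b) * z = ΔL a (TensorProduct.map LinearMap.id (LinearMap.mulLeft ℂ b) z)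
  ΔR_T3 : ∀ (a b : A) (z : A ⊗[ℂ] A),
    z * T3 (a ⊗ₜ b) = ΔR a (TensorProduct.map (LinearMap.mulRight ℂ b) LinearMap.id z)
  ΔR_T4 : ∀ (a b : A) (z : A ⊗[ℂ] A),
    z * T4 (a ⊗ₜ b) = ΔR a (TensorProduct.map LinearMap.id (LinearMap.mulRight ℂ b) z)
  /- coassociativity of `Δ` -/
  coassoc : ∀ a b c : A,
    (TensorProduct.assoc ℂ A A A)
        (LinearMap.rTensor A (T3.toLinearMap ∘ₗ (TensorProduct.mk ℂ A A).flip a)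
          (T2 (c ⊗ₜ b)))
      = LinearMap.lTensor A (T2.toLinearMap ∘ₗ (TensorProduct.mk ℂ A A).flip b)
          (T3 (c ⊗ₜ a))

namespace AQG

variable {A : Type*} [NonUnitalRing A] [Module ℂ A]
  [SMulCommClass ℂ A A] [IsScalarTower ℂ A A] (H : AQG A)

/-- The functional `φa : x ↦ φ(x a)`; the dual algebra is `Â = {φa : a ∈ A}`. -/
def lFun (a : A) : A →ₗ[ℂ] ℂ := H.phi ∘ₗ LinearMap.mulRight ℂ a

/-- The functional `aφ : x ↦ φ(a x)`; also `Â = {aφ : a ∈ A}`. -/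
def rFun (a : A) : A →ₗ[ℂ] ℂ := H.phi ∘ₗ LinearMap.mulLeft ℂ a

/-- The right invariant functional `ψ = φ ∘ S`. -/
def psi : A →ₗ[ℂ] ℂ := H.phi ∘ₗ H.S.toLinearMap

/-- The functional `ψa : x ↦ ψ(x a)`. -/
def lFunPsi (a : A) : A →ₗ[ℂ] ℂ := H.psi ∘ₗ LinearMap.mulRight ℂ a

/-- The right action of `Â` on `A'`: `Ract θ a = θ · (φa)`,
`(θ (φa))(x) = θ((ι ⊙ φa)Δ(x)) = θ((ι ⊙ φ)(Δ(x)(1 ⊗ a)))`. -/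
def Ract (θ : A →ₗ[ℂ] ℂ) (a : A) : A →ₗ[ℂ] ℂ :=
  θ ∘ₗ sliceR H.phi ∘ₗ H.T2.toLinearMap ∘ₗ (TensorProduct.mk ℂ A A).flip a

/-- The left action of `Â` on `A'`: `Lact θ a = (φa) · θ`,
`((φa) θ)(x) = θ((φa ⊙ ι)Δ(x)) = θ((φ ⊙ ι)(Δ(x)(a ⊗ 1)))`. -/
def Lact (θ : A →ₗ[ℂ] ℂ) (a : A) : A →ₗ[ℂ] ℂ :=
  θ ∘ₗ sliceL H.phi ∘ₗ H.T1.toLinearMap ∘ₗ (TensorProduct.mk ℂ A A).flip a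

/-- `c = (ι ⊙ θ)Δ(x)` as an element of `A` (a priori it is only a multiplier). -/
def IsRSlice (θ : A →ₗ[ℂ] ℂ) (x c : A) : Prop :=
  (∀ b : A, c * b = sliceR θ (H.T1 (x ⊗ₜ b))) ∧
  (∀ b : A, b * c = sliceR θ (H.T3 (x ⊗ₜ b)))

/-- `c = (θ ⊙ ι)Δ(x)` as an element of `A`. -/
def IsLSlice (θ : A →ₗ[ℂ] ℂ) (x c : A) : Prop :=
  (∀ b : A, c * b = sliceL θ (H.T2 (x ⊗ₜ b))) ∧
  (∀ b : A, b * c = sliceL θ (H.T4 (x ⊗ₜ b)))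

/-- `θ ∈ M(Â)`: all slices `(θ ⊙ ι)Δ(x)` and `(ι ⊙ θ)Δ(x)` belong to `A`. -/
def HasSlices (θ : A →ₗ[ℂ] ℂ) : Prop :=
  ∀ x : A, (∃ c, H.IsRSlice θ x c) ∧ (∃ c, H.IsLSlice θ x c)

end AQG

end


noncomputable section Proof1

namespace AQG

open TensorProduct LinearMap

variable {A : Type*} [NonUnitalRing A] [Module ℂ A]
  [SMulCommClass ℂ A A] [IsScalarTower ℂ A A]

lemma sliceL_tmul (θ : A →ₗ[ℂ] ℂ) (x y : A) : sliceL θ (x ⊗ₜ[ℂ] y) = θ x • y := by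
  simp [sliceL]

lemma sliceR_tmul (θ : A →ₗ[ℂ] ℂ) (x y : A) : sliceR θ (x ⊗ₜ[ℂ] y) = θ y • x := by
  simp [sliceR]

/-- If all images of `v` under `lTensor` of a separating family vanish, so does `v`. -/
lemma vanish_of_lTensor (v : A ⊗[ℂ] A) (G : A → A →ₗ[ℂ] A)
    (nd : ∀ x : A, (∀ c : A, G c x = 0) → x = 0)
    (hv : ∀ c : A, lTensor A (G c) v = 0) : v = 0 := by
  classical
  set ℬ := Module.Basis.ofVectorSpace ℂ A with hB
  set e : A ⊗[ℂ] A ≃ₗ[ℂ] (Module.Basis.ofVectorSpaceIndex ℂ A →₀ A) :=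
    (TensorProduct.congr ℬ.repr (LinearEquiv.refl ℂ A)).trans
      (TensorProduct.finsuppScalarLeft ℂ A _) with he
  have key : ∀ (g : A →ₗ[ℂ] A) (w : A ⊗[ℂ] A) j, e (lTensor A g w) j = g (e w j) := by
    intro g w j
    induction w using TensorProduct.induction_on with
    | zero => simp
    | tmul x y =>
        simp [he, TensorProduct.congr_tmul, lTensor_tmul,
          TensorProduct.finsuppScalarLeft_apply_tmul_apply, map_smul]
    | add p q hp hq =>
        simp only [map_add, Finsupp.add_apply, hp, hq]
  have hz : ∀ j, e v j = 0 := by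
    intro j
    refine nd _ (fun c => ?_)
    have h1 := key (G c) v j
    rw [hv c] at h1
    simpa using h1.symm
  have h2 : e v = 0 := Finsupp.ext hz
  have h3 := congrArg e.symm h2
  simpa using h3

/-- Mirror of `vanish_of_lTensor` for the first leg. -/
lemma vanish_of_rTensor (v : A ⊗[ℂ] A) (G : A → A →ₗ[ℂ] A)
    (nd : ∀ x : A, (∀ c : A, G c x = 0) → x = 0)
    (hv : ∀ c : A, rTensor A (G c) v = 0) : v = 0 := by
  classical
  set ℬ := Module.Basis.ofVectorSpace ℂ A with hB
  set e : A ⊗[ℂ] A ≃ₗ[ℂ] (Module.Basis.ofVectorSpaceIndex ℂ A →₀ A) :=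
    (TensorProduct.congr (LinearEquiv.refl ℂ A) ℬ.repr).trans
      (TensorProduct.finsuppScalarRight ℂ ℂ A _) with he
  have key : ∀ (g : A →ₗ[ℂ] A) (w : A ⊗[ℂ] A) j, e (rTensor A g w) j = g (e w j) := by
    intro g w j
    induction w using TensorProduct.induction_on with
    | zero => simp
    | tmul x y =>
        simp [he, TensorProduct.congr_tmul, rTensor_tmul,
          TensorProduct.finsuppScalarRight_apply_tmul_apply, map_smul]
    | add p q hp hq =>
        simp only [map_add, Finsupp.add_apply, hp, hq]
  have hz : ∀ j, e v j = 0 := by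
    intro j
    refine nd _ (fun c => ?_)
    have h1 := key (G c) v j
    rw [hv c] at h1
    simpa using h1.symm
  have h2 : e v = 0 := Finsupp.ext hz
  have h3 := congrArg e.symm h2
  simpa using h3

lemma tmul_mul_eq (c d : A) (z : A ⊗[ℂ] A) :
    (c ⊗ₜ[ℂ] d) * z = rTensor A (mulLeft ℂ c) (lTensor A (mulLeft ℂ d) z) := by
  induction z using TensorProduct.induction_on with
  | zero => simp
  | tmul x y => simp [Algebra.TensorProduct.tmul_mul_tmul]
  | add p q hp hq => simp [mul_add, hp, hq]

lemma mul_tmul_eq (c d : A) (z : A ⊗[ℂ] A) :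
    z * (c ⊗ₜ[ℂ] d) = rTensor A (mulRight ℂ c) (lTensor A (mulRight ℂ d) z) := by
  induction z using TensorProduct.induction_on with
  | zero => simp
  | tmul x y => simp [Algebra.TensorProduct.tmul_mul_tmul]
  | add p q hp hq => simp [add_mul, hp, hq]

/-- Separation: left multiplication by simple tensors separates `A ⊗ A`. -/
lemma left_sep (H : AQG A) {u v : A ⊗[ℂ] A}
    (h : ∀ c d : A, (c ⊗ₜ[ℂ] d) * u = (c ⊗ₜ[ℂ] d) * v) : u = v := by
  have hz : ∀ c d : A, rTensor A (mulLeft ℂ c) (lTensor A (mulLeft ℂ d) (u - v)) = 0 := by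
    intro c d
    have h0 := h c d
    rw [tmul_mul_eq, tmul_mul_eq] at h0
    simp only [map_sub, h0, sub_self]
  have h1 : ∀ d : A, lTensor A (mulLeft ℂ d) (u - v) = 0 := by
    intro d
    exact vanish_of_rTensor _ (fun c => mulLeft ℂ c)
      (fun x hx => H.nondeg_r x (by simpa using hx)) (fun c => hz c d)
  have h2 : u - v = 0 :=
    vanish_of_lTensor _ (fun c => mulLeft ℂ c)
      (fun x hx => H.nondeg_r x (by simpa using hx)) h1
  exact sub_eq_zero.mp h2

/-- Separation: right multiplication by simple tensors separates `A ⊗ A`. -/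
lemma right_sep (H : AQG A) {u v : A ⊗[ℂ] A}
    (h : ∀ c d : A, u * (c ⊗ₜ[ℂ] d) = v * (c ⊗ₜ[ℂ] d)) : u = v := by
  have hz : ∀ c d : A, rTensor A (mulRight ℂ c) (lTensor A (mulRight ℂ d) (u - v)) = 0 := by
    intro c d
    have h0 := h c d
    rw [mul_tmul_eq, mul_tmul_eq] at h0
    simp only [map_sub, h0, sub_self]
  have h1 : ∀ d : A, lTensor A (mulRight ℂ d) (u - v) = 0 := by
    intro d
    exact vanish_of_rTensor _ (fun c => mulRight ℂ c)
      (fun x hx => H.nondeg_l x (by simpa using hx)) (fun c => hz c d)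
  have h2 : u - v = 0 :=
    vanish_of_lTensor _ (fun c => mulRight ℂ c)
      (fun x hx => H.nondeg_l x (by simpa using hx)) h1
  exact sub_eq_zero.mp h2

variable (H : AQG A)

lemma lTensor_mulRight_mul (q : A) (u z : A ⊗[ℂ] A) :
    lTensor A (mulRight ℂ q) u * z = u * lTensor A (mulLeft ℂ q) z := by
  induction u using TensorProduct.induction_on with
  | zero => simp
  | tmul x y =>
      induction z using TensorProduct.induction_on with
      | zero => simp
      | tmul p r => simp [Algebra.TensorProduct.tmul_mul_tmul, mul_assoc]
      | add p r hp hr => simp only [map_add, mul_add, hp, hr]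
  | add p r hp hr => simp only [map_add, add_mul, hp, hr]

lemma rTensor_mulLeft_mul (e : A) (u z : A ⊗[ℂ] A) :
    rTensor A (mulLeft ℂ e) u * z = rTensor A (mulLeft ℂ e) (u * z) := by
  induction u using TensorProduct.induction_on with
  | zero => simp
  | tmul x y =>
      induction z using TensorProduct.induction_on with
      | zero => simp
      | tmul p r => simp [Algebra.TensorProduct.tmul_mul_tmul, mul_assoc]
      | add p r hp hr => simp only [map_add, mul_add, hp, hr]
  | add p r hp hr => simp only [map_add, add_mul, hp, hr]

/-- `T4(p ⊗ q) * w = (1 ⊗ q)Δ(p)w`. -/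
lemma T4_mul (p q : A) (w : A ⊗[ℂ] A) :
    H.T4 (p ⊗ₜ[ℂ] q) * w = lTensor A (mulLeft ℂ q) (H.ΔL p w) := by
  refine left_sep H (fun c d => ?_)
  have h1 : (c ⊗ₜ[ℂ] d) * (H.T4 (p ⊗ₜ[ℂ] q) * w)
      = ((c ⊗ₜ[ℂ] d) * H.T4 (p ⊗ₜ[ℂ] q)) * w := (mul_assoc _ _ _).symm
  rw [h1, H.ΔR_T4, H.ΔLR]
  have h2 : TensorProduct.map LinearMap.id (mulRight ℂ q) (c ⊗ₜ[ℂ] d)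
      = lTensor A (mulRight ℂ q) (c ⊗ₜ[ℂ] d) := rfl
  rw [h2, lTensor_mulRight_mul]

/-- `(e ⊗ 1)(1 ⊗ t)Δ(b) = (e ⊗ t)Δ(b)`. -/
lemma rTensor_T4 (e b t : A) :
    rTensor A (mulLeft ℂ e) (H.T4 (b ⊗ₜ[ℂ] t)) = H.ΔR b (e ⊗ₜ[ℂ] t) := by
  refine right_sep H (fun c d => ?_)
  rw [rTensor_mulLeft_mul, T4_mul H, H.ΔLR, tmul_mul_eq]

/-- Multiplicativity of `Δ`: `(a₀ ⊗ 1)Δ(a)Δ(b) = (a₀ ⊗ 1)Δ(ab)`. -/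
lemma ΔR_T3_hom (a b a₀ : A) :
    H.ΔR b (H.T3 (a ⊗ₜ[ℂ] a₀)) = H.T3 ((a * b) ⊗ₜ[ℂ] a₀) := by
  refine left_sep H (fun c d => ?_)
  rw [← H.ΔR_assoc, H.ΔR_T3, ← H.ΔR_mul, ← H.ΔR_T3]

lemma sliceR_rTensor_mulLeft (θ : A →ₗ[ℂ] ℂ) (s : A) (v : A ⊗[ℂ] A) :
    sliceR θ (rTensor A (mulLeft ℂ s) v) = s * sliceR θ v := by
  induction v using TensorProduct.induction_on with
  | zero => simp
  | tmul x y => simp [sliceR_tmul, mul_smul_comm]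
  | add p r hp hr => simp [map_add, hp, hr, mul_add]

lemma sliceR_rTensor_S (v : A ⊗[ℂ] A) :
    sliceR H.phi (rTensor A H.S.toLinearMap v) = H.S (sliceR H.phi v) := by
  induction v using TensorProduct.induction_on with
  | zero => simp
  | tmul x y => simp [sliceR_tmul, map_smul]
  | add p r hp hr => simp [map_add, hp, hr]

/-- The contraction `m ∘ (ι ⊗ S)`. -/
def kap : A ⊗[ℂ] A →ₗ[ℂ] A := LinearMap.mul' ℂ A ∘ₗ lTensor A H.S.toLinearMap

lemma kap_tmul (x y : A) : H.kap (x ⊗ₜ[ℂ] y) = x * H.S y := by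
  simp [kap, mul'_apply]

lemma kap_T3 (x a₀ : A) : H.kap (H.T3 (x ⊗ₜ[ℂ] a₀)) = H.counit x • a₀ := by
  simpa [kap] using H.antipode_r x a₀

/-- `μ : t ↦ S((ι ⊗ φ)(Δ(t)(1 ⊗ b)))`. -/
def muF (b : A) : A →ₗ[ℂ] A :=
  H.S.toLinearMap ∘ₗ sliceR H.phi ∘ₗ H.T2.toLinearMap ∘ₗ (TensorProduct.mk ℂ A A).flip b

lemma muF_apply (b t : A) : H.muF b t = H.S (sliceR H.phi (H.T2 (t ⊗ₜ[ℂ] b))) := rfl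

/-- `ν : t ↦ (ι ⊗ φ)((1 ⊗ t)Δ(b))`. -/
def nuF (b : A) : A →ₗ[ℂ] A :=
  sliceR H.phi ∘ₗ H.T4.toLinearMap ∘ₗ TensorProduct.mk ℂ A A b

lemma nuF_apply (b t : A) : H.nuF b t = sliceR H.phi (H.T4 (b ⊗ₜ[ℂ] t)) := rfl

lemma P1a (s : A) (u : A ⊗[ℂ] A) :
    rTensor A H.kap ((TensorProduct.assoc ℂ A A A).symm (s ⊗ₜ[ℂ] u))
      = rTensor A (mulLeft ℂ s) (rTensor A H.S.toLinearMap u) := by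
  induction u using TensorProduct.induction_on with
  | zero => simp
  | tmul p q =>
      simp [TensorProduct.assoc_symm_tmul, rTensor_tmul, kap_tmul]
  | add p r hp hr => simp [tmul_add, map_add, hp, hr]

lemma P1 (b : A) (v : A ⊗[ℂ] A) :
    sliceR H.phi (rTensor A H.kap ((TensorProduct.assoc ℂ A A A).symm
        (lTensor A (H.T2.toLinearMap ∘ₗ (TensorProduct.mk ℂ A A).flip b) v)))
      = LinearMap.mul' ℂ A (lTensor A (H.muF b) v) := by
  induction v using TensorProduct.induction_on with
  | zero => simp
  | tmul s t =>
      rw [lTensor_tmul]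
      have h0 : (H.T2.toLinearMap ∘ₗ (TensorProduct.mk ℂ A A).flip b) t
          = H.T2 (t ⊗ₜ[ℂ] b) := rfl
      rw [h0, P1a, sliceR_rTensor_mulLeft, sliceR_rTensor_S, lTensor_tmul, mul'_apply,
        muF_apply]
  | add p r hp hr => simp only [map_add, hp, hr]

lemma P2 (a₀ : A) (w : A ⊗[ℂ] A) :
    rTensor A H.kap (rTensor A (H.T3.toLinearMap ∘ₗ (TensorProduct.mk ℂ A A).flip a₀) w)
      = a₀ ⊗ₜ[ℂ] sliceL H.counit w := by
  induction w using TensorProduct.induction_on with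
  | zero => simp
  | tmul x y =>
      rw [rTensor_tmul]
      have h0 : (H.T3.toLinearMap ∘ₗ (TensorProduct.mk ℂ A A).flip a₀) x
          = H.T3 (x ⊗ₜ[ℂ] a₀) := rfl
      rw [h0, rTensor_tmul, kap_T3, sliceL_tmul, TensorProduct.smul_tmul]
  | add p r hp hr => simp only [map_add, hp, hr, tmul_add]

/-- Main identity for `μ`. -/
lemma mu_main (a b a₀ : A) :
    LinearMap.mul' ℂ A (lTensor A (H.muF b) (H.T3 (a ⊗ₜ[ℂ] a₀)))
      = H.phi (a * b) • a₀ := by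
  rw [← P1 H b (H.T3 (a ⊗ₜ[ℂ] a₀)), ← H.coassoc a₀ b a, LinearEquiv.symm_apply_apply,
    P2, H.counit_T2, sliceR_tmul]

/-- Main identity for `ν`. -/
lemma nu_main (a b a₀ : A) :
    LinearMap.mul' ℂ A (lTensor A (H.nuF b) (H.T3 (a ⊗ₜ[ℂ] a₀)))
      = H.phi (a * b) • a₀ := by
  have P3 : ∀ v : A ⊗[ℂ] A,
      LinearMap.mul' ℂ A (lTensor A (H.nuF b) v) = sliceR H.phi (H.ΔR b v) := by
    intro v
    induction v using TensorProduct.induction_on with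
    | zero => simp
    | tmul s t =>
        rw [lTensor_tmul, mul'_apply, nuF_apply, ← sliceR_rTensor_mulLeft, rTensor_T4]
    | add p r hp hr => simp only [map_add, hp, hr]
  rw [P3, ΔR_T3_hom, H.left_inv_T3]

lemma muF_eq_nuF (b t : A) : H.muF b t = H.nuF b t := by
  have key : (LinearMap.mul' ℂ A ∘ₗ lTensor A (H.muF b) ∘ₗ H.T3.toLinearMap)
      = (LinearMap.mul' ℂ A ∘ₗ lTensor A (H.nuF b) ∘ₗ H.T3.toLinearMap) := by
    refine TensorProduct.ext' (fun a a₀ => ?_)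
    have h1 : H.T3.toLinearMap (a ⊗ₜ[ℂ] a₀) = H.T3 (a ⊗ₜ[ℂ] a₀) := rfl
    simp only [LinearMap.comp_apply, h1, mu_main, nu_main]
  have key2 : ∀ g : A, g * (H.muF b t - H.nuF b t) = 0 := by
    intro g
    have h2 := DFunLike.congr_fun key (H.T3.symm (g ⊗ₜ[ℂ] t))
    simp only [LinearMap.comp_apply] at h2
    have h3 : H.T3.toLinearMap (H.T3.symm (g ⊗ₜ[ℂ] t)) = g ⊗ₜ[ℂ] t :=
      H.T3.apply_symm_apply _
    rw [h3, lTensor_tmul, lTensor_tmul, mul'_apply, mul'_apply] at h2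
    rw [mul_sub, h2, sub_self]
  exact sub_eq_zero.mp (H.nondeg_r _ key2)

end AQG

end Proof1

/-- `(ι ⊙ φ)((1 ⊗ a)Δ(b)) = S((ι ⊙ φ)(Δ(a)(1 ⊗ b)))` for all `a, b ∈ A`. -/
theorem AQG.phi_antipode_identity {A : Type*} [NonUnitalRing A] [Module ℂ A]
    [SMulCommClass ℂ A A] [IsScalarTower ℂ A A] (H : AQG A) (a b : A) :
    sliceR H.phi (H.T4 (b ⊗ₜ a)) = H.S (sliceR H.phi (H.T2 (a ⊗ₜ b))) := by
  have h := AQG.muF_eq_nuF H b a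
  rw [AQG.muF_apply, AQG.nuF_apply] at h
  exact h.symm
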